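/- Let F be a homogeneous polynomial of degree d ≥ 2 in variables x_0, ..., x_{n+1} whose sparsity is greater than 2 (any two distinct monomials of F are at L¹-distance > 2 in their exponent vectors). Then the rank of the linear map x ↦ ∂F/∂x on the span of the variables equals the number of variables actually appearing in F. -/

import Mathlib

open MvPolynomial

lemma coeff_pderiv' {N : ℕ} (i : Fin N) (F : MvPolynomial (Fin N) ℂ) (m : Fin N →₀ ℕ) :
    coeff m (pderiv i F) = (m i + 1 : ℂ) * coeff (m + Finsupp.single i 1) F := by
  induction F using MvPolynomial.induction_on' with
  | monomial s a =>
    rw [pderiv_monomial, coeff_monomial, coeff_monomial]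
    by_cases h : s = m + Finsupp.single i 1
    · subst h
      rw [if_pos (add_tsub_cancel_right _ _), if_pos rfl]
      simp [Finsupp.add_apply, Finsupp.single_eq_same]
      ring
    · rw [if_neg h, mul_zero]
      by_cases h2 : s - Finsupp.single i 1 = m
      · rw [if_pos h2]
        have hs : s i = 0 := by
          by_contra hne
          apply h
          rw [← h2, tsub_add_cancel_of_le]
          exact Finsupp.single_le_iff.mpr (Nat.one_le_iff_ne_zero.mpr hne)
        simp [hs]
      · rw [if_neg h2]
  | add p q hp hq => simp only [map_add, coeff_add, hp, hq]; ring

lemma mem_support_pderiv' {N : ℕ} (i : Fin N) (F : MvPolynomial (Fin N) ℂ) (m : Fin N →₀ ℕ) :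
    m ∈ (pderiv i F).support ↔ m + Finsupp.single i 1 ∈ F.support := by
  have hne : ((m i : ℂ) + 1) ≠ 0 := by
    have : ((m i + 1 : ℕ) : ℂ) ≠ 0 := Nat.cast_ne_zero.mpr (Nat.succ_ne_zero _)
    push_cast at this; exact this
  simp only [MvPolynomial.mem_support_iff, coeff_pderiv', mul_ne_zero_iff]
  exact ⟨fun h => h.2, fun h => ⟨hne, h⟩⟩

/-- The differential rank of a polynomial: the rank of the linear map
`x ↦ ∂F/∂x` on the span of the variables. -/
noncomputable def drank {N : ℕ} (F : MvPolynomial (Fin N) ℂ) : ℕ :=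
  Module.finrank ℂ (Submodule.span ℂ (Set.range fun i => MvPolynomial.pderiv i F))

theorem stmt_4 (N d : ℕ) (hd : 2 ≤ d) (F : MvPolynomial (Fin N) ℂ)
    (hF : F.IsHomogeneous d)
    (hspar : ∀ m₁ ∈ F.support, ∀ m₂ ∈ F.support, m₁ ≠ m₂ →
      2 < ∑ i, ((m₁ i : ℤ) - (m₂ i : ℤ)).natAbs) :
    drank F = F.vars.card := by
  classical
  -- supports of distinct partial derivatives are disjoint
  have hdisj : ∀ i j : Fin N, i ≠ j → ∀ m, m ∈ (pderiv i F).support →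
      m ∉ (pderiv j F).support := by
    intro i j hij m hi hj
    rw [mem_support_pderiv'] at hi hj
    have hne : m + Finsupp.single i 1 ≠ m + Finsupp.single j 1 := by
      intro h
      have h2 : (Finsupp.single i 1 : Fin N →₀ ℕ) = Finsupp.single j 1 :=
        add_left_cancel h
      have := congrArg (fun f => f i) h2
      simp [Finsupp.single_apply, hij.symm] at this
    have hlt := hspar _ hi _ hj hne
    set a := m + Finsupp.single i 1 with ha
    set b := m + Finsupp.single j 1 with hb
    have hsum : ∑ k, ((a k : ℤ) - (b k : ℤ)).natAbs = 2 := by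
      have hterm : ∀ k, ((a k : ℤ) - (b k : ℤ)).natAbs =
          (if i = k then 1 else 0) + (if j = k then 1 else 0) := by
        intro k
        simp only [ha, hb, Finsupp.add_apply, Finsupp.single_apply]
        by_cases h1 : i = k <;> by_cases h2 : j = k
        · exact absurd (h1.trans h2.symm) hij
        · simp [h1, h2]
        · simp [h1, h2]
        · simp [h1, h2]
      rw [Finset.sum_congr rfl fun k _ => hterm k, Finset.sum_add_distrib,
        Finset.sum_ite_eq, Finset.sum_ite_eq]
      simp
    omega
  -- nonzeroness for variables that appear
  have hne0 : ∀ i : Fin N, i ∈ F.vars → (pderiv i F).support.Nonempty := by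
    intro i hi
    rw [mem_vars] at hi
    obtain ⟨m, hm, him⟩ := hi
    refine ⟨m - Finsupp.single i 1, ?_⟩
    rw [mem_support_pderiv', tsub_add_cancel_of_le]
    · exact hm
    · exact Finsupp.single_le_iff.mpr (Nat.one_le_iff_ne_zero.mpr
        (Finsupp.mem_support_iff.mp him))
  -- linear independence of the derivatives indexed by vars
  have hli : LinearIndependent ℂ fun i : ↥F.vars => pderiv (i : Fin N) F := by
    rw [Fintype.linearIndependent_iff]
    intro g hg j
    obtain ⟨μ, hμ⟩ := hne0 j j.2
    have hc := congrArg (coeff μ) hg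
    rw [coeff_zero] at hc
    rw [show coeff μ (∑ i, g i • pderiv (i : Fin N) F) =
        ∑ i, g i * coeff μ (pderiv (i : Fin N) F) by
      rw [MvPolynomial.coeff_sum]; exact Finset.sum_congr rfl fun i _ => coeff_smul _ _ _] at hc
    rw [Finset.sum_eq_single j (fun i _ hij => ?_) (fun h => absurd (Finset.mem_univ j) h)] at hc
    · exact (mul_eq_zero.mp hc).resolve_right (MvPolynomial.mem_support_iff.mp hμ)
    · have : (i : Fin N) ≠ (j : Fin N) := fun h => hij (Subtype.ext h)
      rw [MvPolynomial.notMem_support_iff.mp (hdisj _ _ this.symm μ hμ ∘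
        fun h => h), mul_zero]
  -- the two spans coincide
  have hspan : Submodule.span ℂ (Set.range fun i : Fin N => pderiv i F) =
      Submodule.span ℂ (Set.range fun i : ↥F.vars => pderiv (i : Fin N) F) := by
    apply le_antisymm <;> rw [Submodule.span_le]
    · rintro _ ⟨i, rfl⟩
      by_cases hi : i ∈ F.vars
      · exact Submodule.subset_span ⟨⟨i, hi⟩, rfl⟩
      · simp only [pderiv_eq_zero_of_notMem_vars hi]
        exact Submodule.zero_mem _
    · rintro _ ⟨i, rfl⟩
      exact Submodule.subset_span ⟨(i : Fin N), rfl⟩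
  rw [drank, hspan, finrank_span_eq_card hli, Fintype.card_coe]
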